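/- Let N ≥ 1, μ₂ ≥ μ₁ > 0, κ ≤ −1 and β > 0. If u, v : ℝ^N → ℝ are C² functions with u(x) > 0 and v(x) > 0 for all x, satisfying −Δu + u = μ₁u³ + βuv² − κv and −Δv + v = μ₂v³ + βu²v − κu pointwise, then U := u + v satisfies −ΔU(x) ≥ min{μ₁, β/3}·U(x)³ for all x ∈ ℝ^N. -/

import Mathlib

open MeasureTheory

/-- The Euclidean Laplacian: sum of second partial derivatives. -/
noncomputable def laplacian {N : ℕ} (u : EuclideanSpace ℝ (Fin N) → ℝ)
    (x : EuclideanSpace ℝ (Fin N)) : ℝ :=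
  ∑ i, iteratedFDeriv ℝ 2 u x ![EuclideanSpace.single i 1, EuclideanSpace.single i 1]

theorem stmt15 (N : ℕ) (hN : 1 ≤ N) (μ₁ μ₂ κ β : ℝ)
    (hμ₁ : 0 < μ₁) (hμ₁₂ : μ₁ ≤ μ₂) (hκ : κ ≤ -1) (hβ : 0 < β)
    (u v : EuclideanSpace ℝ (Fin N) → ℝ) (hu : ContDiff ℝ 2 u) (hv : ContDiff ℝ 2 v)
    (hupos : ∀ x, 0 < u x) (hvpos : ∀ x, 0 < v x)
    (hequ : ∀ x, -laplacian u x + u x = μ₁ * u x ^ 3 + β * u x * v x ^ 2 - κ * v x)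
    (heqv : ∀ x, -laplacian v x + v x = μ₂ * v x ^ 3 + β * u x ^ 2 * v x - κ * u x) :
    ∀ x, -laplacian (fun y => u y + v y) x ≥ min μ₁ (β / 3) * (u x + v x) ^ 3 := by
  intro x
  have hadd : laplacian (fun y => u y + v y) x = laplacian u x + laplacian v x := by
    unfold laplacian
    rw [← Finset.sum_add_distrib]
    refine Finset.sum_congr rfl fun i _ => ?_
    have : (fun y => u y + v y) = u + v := rfl
    rw [this, iteratedFDeriv_add_apply hu.contDiffAt hv.contDiffAt]
    rfl
  have h1 := hequ x
  have h2 := heqv x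
  have hm1 : min μ₁ (β / 3) ≤ μ₁ := min_le_left _ _
  have hm2 : min μ₁ (β / 3) ≤ β / 3 := min_le_right _ _
  have hU := hupos x
  have hV := hvpos x
  rw [hadd]
  nlinarith [mul_pos hU hV, sq_nonneg (u x + v x), sq_nonneg (u x - v x),
    mul_pos (mul_pos hU hV) (add_pos hU hV), mul_nonneg hU.le hV.le,
    mul_nonneg (mul_nonneg hU.le hU.le) hU.le, mul_nonneg (mul_nonneg hV.le hV.le) hV.le]
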